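/- For every word f over {1,…,m}, the set PD_f = {x ∈ ℂ^d : t_f(x x†) = 0} is a linear subspace of ℂ^d. -/

import Mathlib

noncomputable section
open Matrix
open scoped ComplexOrder

variable {d m r : ℕ}

/-- One step of process `i`: `T_i(ρ) = E_i(M₁ ρ M₁†) = ∑_j (E_{i,j} M₁) ρ (E_{i,j} M₁)†`. -/
def Tstep (E : Fin m → Fin r → Matrix (Fin d) (Fin d) ℂ)
    (M1 : Matrix (Fin d) (Fin d) ℂ) (i : Fin m)
    (ρ : Matrix (Fin d) (Fin d) ℂ) : Matrix (Fin d) (Fin d) ℂ :=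
  ∑ j, (E i j * M1) * ρ * (E i j * M1)ᴴ

/-- `T_f` for a word `f = s₁⋯s_n`: apply `T_{s₁}` first, then `T_{s₂}`, …, `T_{s_n}`. -/
def Tword (E : Fin m → Fin r → Matrix (Fin d) (Fin d) ℂ)
    (M1 : Matrix (Fin d) (Fin d) ℂ) (f : List (Fin m))
    (ρ : Matrix (Fin d) (Fin d) ℂ) : Matrix (Fin d) (Fin d) ℂ :=
  f.foldl (fun σ k => Tstep E M1 k σ) ρ

/-- The support of a matrix: its column space, as a subspace of `ℂ^d`. -/
def supp (A : Matrix (Fin d) (Fin d) ℂ) : Submodule ℂ (Fin d → ℂ) :=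
  LinearMap.range (Matrix.toLin' A)

/-- Length-`n` prefix of a schedule. -/
def prefixn (s : ℕ → Fin m) (n : ℕ) : List (Fin m) :=
  List.ofFn (fun i : Fin n => s i)

/-- Termination probability within a word `f`. -/
def tWord (E : Fin m → Fin r → Matrix (Fin d) (Fin d) ℂ)
    (M0 M1 : Matrix (Fin d) (Fin d) ℂ) (f : List (Fin m))
    (ρ : Matrix (Fin d) (Fin d) ℂ) : ℝ :=
  ∑ n ∈ Finset.range (f.length + 1),
    (M0 * Tword E M1 (f.take n) ρ * M0ᴴ).trace.re

/-- Termination probability along a schedule `s`. -/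
def tSched (E : Fin m → Fin r → Matrix (Fin d) (Fin d) ℂ)
    (M0 M1 : Matrix (Fin d) (Fin d) ℂ) (s : ℕ → Fin m)
    (ρ : Matrix (Fin d) (Fin d) ℂ) : ℝ :=
  ∑' n : ℕ, (M0 * Tword E M1 (prefixn s n) ρ * M0ᴴ).trace.re

/-- Termination probability `t(ρ)`: infimum over all schedules. -/
def tInf (E : Fin m → Fin r → Matrix (Fin d) (Fin d) ℂ)
    (M0 M1 : Matrix (Fin d) (Fin d) ℂ)
    (ρ : Matrix (Fin d) (Fin d) ℂ) : ℝ :=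
  ⨅ s : ℕ → Fin m, tSched E M0 M1 s ρ

/-- The reachable space `H_{R(ρ)}`. -/
def HR (E : Fin m → Fin r → Matrix (Fin d) (Fin d) ℂ)
    (M1 : Matrix (Fin d) (Fin d) ℂ)
    (ρ : Matrix (Fin d) (Fin d) ℂ) : Submodule ℂ (Fin d → ℂ) :=
  ⨆ f : List (Fin m), supp (Tword E M1 f ρ)

/-- The average super-operator `T = (1/m) ∑ T_i`. -/
def Tavg (E : Fin m → Fin r → Matrix (Fin d) (Fin d) ℂ)
    (M1 : Matrix (Fin d) (Fin d) ℂ)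
    (ρ : Matrix (Fin d) (Fin d) ℂ) : Matrix (Fin d) (Fin d) ℂ :=
  ((m : ℂ)⁻¹) • ∑ i : Fin m, Tstep E M1 i ρ

/-- `H_{R̄_n(ρ)} = ⋁_{k=0}^n supp(T^k(ρ))`. -/
def HRbar (E : Fin m → Fin r → Matrix (Fin d) (Fin d) ℂ)
    (M1 : Matrix (Fin d) (Fin d) ℂ)
    (ρ : Matrix (Fin d) (Fin d) ℂ) (n : ℕ) : Submodule ℂ (Fin d → ℂ) :=
  ⨆ k : Fin (n + 1), supp ((Tavg E M1)^[k] ρ)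

/-- Reachable termination probability `h(ρ)`. -/
def hProb (E : Fin m → Fin r → Matrix (Fin d) (Fin d) ℂ)
    (M0 M1 : Matrix (Fin d) (Fin d) ℂ)
    (ρ : Matrix (Fin d) (Fin d) ℂ) : ℝ :=
  sInf { x : ℝ | ∃ σ : Matrix (Fin d) (Fin d) ℂ,
    σ.PosSemidef ∧ σ.trace = 1 ∧ supp σ ≤ HR E M1 ρ ∧ x = tInf E M0 M1 σ }

/-- `PD_f`: pure states diverging within the word `f`. -/
def PDword (E : Fin m → Fin r → Matrix (Fin d) (Fin d) ℂ)
    (M0 M1 : Matrix (Fin d) (Fin d) ℂ) (f : List (Fin m)) : Set (Fin d → ℂ) :=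
  { x : Fin d → ℂ | tWord E M0 M1 f (Matrix.vecMulVec x (star x)) = 0 }

/-- `PD_n`: union of `PD_f` over words of length `n`. -/
def PDn (E : Fin m → Fin r → Matrix (Fin d) (Fin d) ℂ)
    (M0 M1 : Matrix (Fin d) (Fin d) ℂ) (n : ℕ) : Set (Fin d → ℂ) :=
  { x : Fin d → ℂ | ∃ f : List (Fin m), f.length = n ∧ x ∈ PDword E M0 M1 f }

/-- `PD`: the diverging pure states. -/
def PD (E : Fin m → Fin r → Matrix (Fin d) (Fin d) ℂ)
    (M0 M1 : Matrix (Fin d) (Fin d) ℂ) : Set (Fin d → ℂ) :=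
  { x : Fin d → ℂ | ∃ s : ℕ → Fin m, tSched E M0 M1 s (Matrix.vecMulVec x (star x)) = 0 }


section Aux

lemma Tstep_add (E : Fin m → Fin r → Matrix (Fin d) (Fin d) ℂ)
    (M1 : Matrix (Fin d) (Fin d) ℂ) (i : Fin m) (ρ σ : Matrix (Fin d) (Fin d) ℂ) :
    Tstep E M1 i (ρ + σ) = Tstep E M1 i ρ + Tstep E M1 i σ := by
  simp [Tstep, Matrix.mul_add, Matrix.add_mul, Finset.sum_add_distrib]

lemma Tstep_smul (E : Fin m → Fin r → Matrix (Fin d) (Fin d) ℂ)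
    (M1 : Matrix (Fin d) (Fin d) ℂ) (i : Fin m) (c : ℂ) (ρ : Matrix (Fin d) (Fin d) ℂ) :
    Tstep E M1 i (c • ρ) = c • Tstep E M1 i ρ := by
  simp [Tstep, Matrix.mul_smul, Matrix.smul_mul, Finset.smul_sum]

lemma Tstep_zero (E : Fin m → Fin r → Matrix (Fin d) (Fin d) ℂ)
    (M1 : Matrix (Fin d) (Fin d) ℂ) (i : Fin m) :
    Tstep E M1 i (0 : Matrix (Fin d) (Fin d) ℂ) = 0 := by
  simp [Tstep]

lemma Tstep_posSemidef (E : Fin m → Fin r → Matrix (Fin d) (Fin d) ℂ)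
    (M1 : Matrix (Fin d) (Fin d) ℂ) (i : Fin m) {ρ : Matrix (Fin d) (Fin d) ℂ}
    (hρ : ρ.PosSemidef) : (Tstep E M1 i ρ).PosSemidef := by
  unfold Tstep
  refine Finset.sum_induction _ _ (fun a b ha hb => ha.add hb) Matrix.PosSemidef.zero ?_
  intro j _
  exact hρ.mul_mul_conjTranspose_same _

lemma Tword_add (E : Fin m → Fin r → Matrix (Fin d) (Fin d) ℂ)
    (M1 : Matrix (Fin d) (Fin d) ℂ) (f : List (Fin m)) (ρ σ : Matrix (Fin d) (Fin d) ℂ) :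
    Tword E M1 f (ρ + σ) = Tword E M1 f ρ + Tword E M1 f σ := by
  induction f generalizing ρ σ with
  | nil => rfl
  | cons k f ih =>
      simp only [Tword, List.foldl_cons] at *
      rw [Tstep_add]; exact ih _ _

lemma Tword_smul (E : Fin m → Fin r → Matrix (Fin d) (Fin d) ℂ)
    (M1 : Matrix (Fin d) (Fin d) ℂ) (f : List (Fin m)) (c : ℂ) (ρ : Matrix (Fin d) (Fin d) ℂ) :
    Tword E M1 f (c • ρ) = c • Tword E M1 f ρ := by
  induction f generalizing ρ with
  | nil => rfl
  | cons k f ih =>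
      simp only [Tword, List.foldl_cons] at *
      rw [Tstep_smul]; exact ih _

lemma Tword_zero (E : Fin m → Fin r → Matrix (Fin d) (Fin d) ℂ)
    (M1 : Matrix (Fin d) (Fin d) ℂ) (f : List (Fin m)) :
    Tword E M1 f (0 : Matrix (Fin d) (Fin d) ℂ) = 0 := by
  induction f with
  | nil => rfl
  | cons k f ih => simp only [Tword, List.foldl_cons] at *; rw [Tstep_zero]; exact ih

lemma Tword_posSemidef (E : Fin m → Fin r → Matrix (Fin d) (Fin d) ℂ)
    (M1 : Matrix (Fin d) (Fin d) ℂ) (f : List (Fin m)) {ρ : Matrix (Fin d) (Fin d) ℂ}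
    (hρ : ρ.PosSemidef) : (Tword E M1 f ρ).PosSemidef := by
  induction f generalizing ρ with
  | nil => exact hρ
  | cons k f ih =>
      simp only [Tword, List.foldl_cons] at *
      exact ih (Tstep_posSemidef E M1 k hρ)

lemma trace_re_nonneg {A : Matrix (Fin d) (Fin d) ℂ} (hA : A.PosSemidef) :
    0 ≤ A.trace.re := by
  have htr : A.trace = ∑ i, A i i := rfl
  rw [htr, Complex.re_sum]
  refine Finset.sum_nonneg fun i _ => ?_
  have := hA.re_dotProduct_nonneg (Pi.single i 1)
  simpa [dotProduct, Matrix.mulVec, Pi.single_apply, Finset.sum_ite_eq,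
    Finset.sum_ite_eq'] using this

lemma tWord_add (E : Fin m → Fin r → Matrix (Fin d) (Fin d) ℂ)
    (M0 M1 : Matrix (Fin d) (Fin d) ℂ) (f : List (Fin m)) (ρ σ : Matrix (Fin d) (Fin d) ℂ) :
    tWord E M0 M1 f (ρ + σ) = tWord E M0 M1 f ρ + tWord E M0 M1 f σ := by
  unfold tWord
  rw [← Finset.sum_add_distrib]
  refine Finset.sum_congr rfl fun n _ => ?_
  rw [Tword_add, Matrix.mul_add, Matrix.add_mul, Matrix.trace_add, Complex.add_re]

lemma tWord_smul_real (E : Fin m → Fin r → Matrix (Fin d) (Fin d) ℂ)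
    (M0 M1 : Matrix (Fin d) (Fin d) ℂ) (f : List (Fin m)) (c : ℝ)
    (ρ : Matrix (Fin d) (Fin d) ℂ) :
    tWord E M0 M1 f ((c : ℂ) • ρ) = c * tWord E M0 M1 f ρ := by
  unfold tWord
  rw [Finset.mul_sum]
  refine Finset.sum_congr rfl fun n _ => ?_
  rw [Tword_smul, Matrix.mul_smul, Matrix.smul_mul, Matrix.trace_smul, smul_eq_mul,
    Complex.re_ofReal_mul]

lemma tWord_nonneg (E : Fin m → Fin r → Matrix (Fin d) (Fin d) ℂ)
    (M0 M1 : Matrix (Fin d) (Fin d) ℂ) (f : List (Fin m)) {ρ : Matrix (Fin d) (Fin d) ℂ}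
    (hρ : ρ.PosSemidef) : 0 ≤ tWord E M0 M1 f ρ := by
  refine Finset.sum_nonneg fun n _ => ?_
  have h1 : (M0 * Tword E M1 (f.take n) ρ * M0ᴴ).PosSemidef :=
    (Tword_posSemidef E M1 _ hρ).mul_mul_conjTranspose_same M0
  exact trace_re_nonneg h1

lemma vecMulVec_star_posSemidef (x : Fin d → ℂ) :
    (Matrix.vecMulVec x (star x)).PosSemidef := by
  rw [Matrix.posSemidef_iff_dotProduct_mulVec]
  constructor
  · ext i j
    simp [Matrix.conjTranspose_apply, Matrix.vecMulVec_apply, mul_comm]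
  · intro y
    have key : star y ⬝ᵥ (Matrix.vecMulVec x (star x) *ᵥ y)
        = (star y ⬝ᵥ x) * star (star y ⬝ᵥ x) := by
      simp only [dotProduct, Matrix.mulVec, Matrix.vecMulVec_apply, Pi.star_apply,
        star_sum, star_mul', star_star]
      rw [Finset.sum_mul]
      refine Finset.sum_congr rfl fun i _ => ?_
      rw [Finset.mul_sum, Finset.mul_sum]
      refine Finset.sum_congr rfl fun j _ => ?_
      ring
    rw [key]
    exact mul_star_self_nonneg _

lemma vecMulVec_star_add (x y : Fin d → ℂ) :
    Matrix.vecMulVec (x + y) (star (x + y)) =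
      Matrix.vecMulVec x (star x) + Matrix.vecMulVec y (star y) +
        (Matrix.vecMulVec x (star y) + Matrix.vecMulVec y (star x)) := by
  ext i j
  simp only [Matrix.add_apply, Matrix.vecMulVec_apply, Pi.add_apply, Pi.star_apply, star_add]
  ring

lemma vecMulVec_star_sub (x y : Fin d → ℂ) :
    Matrix.vecMulVec (x - y) (star (x - y)) + (Matrix.vecMulVec x (star y) +
      Matrix.vecMulVec y (star x)) =
      Matrix.vecMulVec x (star x) + Matrix.vecMulVec y (star y) := by
  ext i j
  simp only [Matrix.add_apply, Matrix.vecMulVec_apply, Pi.sub_apply, Pi.star_apply, star_sub]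
  ring

lemma vecMulVec_star_smul (c : ℂ) (x : Fin d → ℂ) :
    Matrix.vecMulVec (c • x) (star (c • x)) =
      ((Complex.normSq c : ℝ) : ℂ) • Matrix.vecMulVec x (star x) := by
  ext i j
  simp only [Matrix.smul_apply, Matrix.vecMulVec_apply, Pi.smul_apply, Pi.star_apply,
    star_smul, smul_eq_mul]
  rw [← Complex.mul_conj]
  simp [Complex.star_def]
  ring

end Aux

/-- `PD_f` is a linear subspace of `ℂ^d`. -/
theorem PDword_subspace (d m r : ℕ) (hd : 0 < d) (hm : 0 < m)
    (E : Fin m → Fin r → Matrix (Fin d) (Fin d) ℂ)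
    (hE : ∀ i, ∑ j, (E i j)ᴴ * E i j = 1)
    (M0 M1 : Matrix (Fin d) (Fin d) ℂ)
    (hM : M0ᴴ * M0 + M1ᴴ * M1 = 1)
    (f : List (Fin m)) :
    (0 : Fin d → ℂ) ∈ PDword E M0 M1 f ∧
    (∀ x ∈ PDword E M0 M1 f, ∀ y ∈ PDword E M0 M1 f, x + y ∈ PDword E M0 M1 f) ∧
    (∀ (c : ℂ), ∀ x ∈ PDword E M0 M1 f, c • x ∈ PDword E M0 M1 f) := by
  refine ⟨?_, ?_, ?_⟩
  · show tWord E M0 M1 f (Matrix.vecMulVec 0 (star (0 : Fin d → ℂ))) = 0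
    have h0 : Matrix.vecMulVec (0 : Fin d → ℂ) (star (0 : Fin d → ℂ)) = 0 := by
      ext i j; simp [Matrix.vecMulVec_apply]
    rw [h0]
    unfold tWord
    refine Finset.sum_eq_zero fun n _ => ?_
    rw [Tword_zero]; simp
  · intro x hx y hy
    simp only [PDword, Set.mem_setOf_eq] at *
    set u : ℝ := tWord E M0 M1 f (Matrix.vecMulVec x (star y)) +
      tWord E M0 M1 f (Matrix.vecMulVec y (star x)) with hu
    have hplus : tWord E M0 M1 f (Matrix.vecMulVec (x + y) (star (x + y))) = u := by
      rw [vecMulVec_star_add, tWord_add, tWord_add, tWord_add, hx, hy, hu]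
      ring
    have hminus : tWord E M0 M1 f (Matrix.vecMulVec (x - y) (star (x - y))) + u = 0 := by
      have := congrArg (tWord E M0 M1 f) (vecMulVec_star_sub x y)
      rw [tWord_add, tWord_add, tWord_add, hx, hy] at this
      rw [hu]; linarith [this]
    have h1 : 0 ≤ tWord E M0 M1 f (Matrix.vecMulVec (x + y) (star (x + y))) :=
      tWord_nonneg E M0 M1 f (vecMulVec_star_posSemidef _)
    have h2 : 0 ≤ tWord E M0 M1 f (Matrix.vecMulVec (x - y) (star (x - y))) :=
      tWord_nonneg E M0 M1 f (vecMulVec_star_posSemidef _)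
    linarith
  · intro c x hx
    simp only [PDword, Set.mem_setOf_eq] at *
    rw [vecMulVec_star_smul, tWord_smul_real, hx, mul_zero]
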